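/- Let n ≥ 2 and let S_n be the n×n shift matrix. The numerical range W(S_n) = {⟨S_n x, x⟩ : x ∈ ℂ^n, ‖x‖ ≤ 1} equals the closed disc {z ∈ ℂ : |z| ≤ cos(π/(n+1))}, and consequently the numerical radius satisfies ω(S_n) = cos(π/(n+1)). -/

import Mathlib

open Matrix

noncomputable section

/-- The `n × n` nilpotent shift matrix: `(S_n)_{ij} = 1` if `i = j + 1`, else `0`. -/
def shiftMatrix (n : ℕ) : Matrix (Fin n) (Fin n) ℂ :=
  Matrix.of fun i j => if (i : ℕ) = (j : ℕ) + 1 then 1 else 0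

/-- The rank-`k` numerical range of a square complex matrix `T`:
all `λ` such that `P * T * P = λ • P` for some orthogonal projection `P` of rank `k`. -/
def rankNumRange {m : Type*} [Fintype m] (k : ℕ) (T : Matrix m m ℂ) : Set ℂ :=
  {lam : ℂ | ∃ P : Matrix m m ℂ,
    P * P = P ∧ Pᴴ = P ∧ P.rank = k ∧ P * T * P = lam • P}

/-- The numerical range of a square complex matrix:
`W(T) = {⟨Tx, x⟩ : ‖x‖ ≤ 1}`. -/
def numRange {N : ℕ} (T : Matrix (Fin N) (Fin N) ℂ) : Set ℂ :=
  {z : ℂ | ∃ x : Fin N → ℂ, ∑ i, ‖x i‖ ^ 2 ≤ 1 ∧ z = star x ⬝ᵥ (T *ᵥ x)}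

section Aux

open Real Finset

/-- `dd n k = sin (k π/(n+1))`. -/
def dd (n k : ℕ) : ℝ := Real.sin (k * (π / (n + 1)))

lemma theta_pos (n : ℕ) : 0 < π / (n + 1) := by positivity

lemma theta_lt (n : ℕ) (hn : 2 ≤ n) : π / (n + 1) < π / 2 := by
  apply div_lt_div_of_pos_left pi_pos two_pos
  have : (2:ℝ) ≤ n := by exact_mod_cast hn
  linarith

lemma cos_theta_pos (n : ℕ) (hn : 2 ≤ n) : 0 < Real.cos (π / (n + 1)) := by
  apply Real.cos_pos_of_mem_Ioo
  constructor
  · have := theta_pos n; linarith [Real.pi_pos]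
  · exact theta_lt n hn

lemma dd_rec (n k : ℕ) : dd n k + dd n (k + 2) = 2 * Real.cos (π / (n + 1)) * dd n (k + 1) := by
  unfold dd
  push_cast
  rw [show ((k:ℝ)) * (π / (n + 1)) = ((k:ℝ)+1) * (π / (n + 1)) - π / (n + 1) by ring,
      show ((k:ℝ)+2) * (π / (n + 1)) = ((k:ℝ)+1) * (π / (n + 1)) + π / (n + 1) by ring,
      Real.sin_sub, Real.sin_add]
  ring

lemma dd_pos (n k : ℕ) (h1 : 1 ≤ k) (h2 : k ≤ n) : 0 < dd n k := by
  apply Real.sin_pos_of_pos_of_lt_pi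
  · have : (0:ℝ) < k := by exact_mod_cast h1
    exact mul_pos this (theta_pos n)
  · have hk : (k:ℝ) < (n:ℝ) + 1 := by
      have : (k:ℝ) ≤ n := by exact_mod_cast h2
      linarith
    have hn1 : (0:ℝ) < (n:ℝ) + 1 := by positivity
    calc (k:ℝ) * (π / (n + 1)) = π * ((k:ℝ) / ((n:ℝ)+1)) := by ring
    _ < π * 1 := by
        apply mul_lt_mul_of_pos_left _ pi_pos
        rwa [div_lt_one hn1]
    _ = π := by ring

lemma dd_zero (n : ℕ) : dd n 0 = 0 := by simp [dd]

lemma dd_top (n : ℕ) : dd n (n + 1) = 0 := by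
  unfold dd
  push_cast
  rw [mul_div_assoc', mul_comm, mul_div_assoc, div_self (by positivity : ((n:ℝ)+1) ≠ 0), mul_one]
  exact Real.sin_pi

lemma amgm (x y p q : ℝ) (hp : 0 < p) (hq : 0 < q) :
    2 * (x * y) ≤ p / q * x ^ 2 + q / p * y ^ 2 := by
  rw [div_mul_eq_mul_div, div_mul_eq_mul_div,
      div_add_div _ _ (ne_of_gt hq) (ne_of_gt hp), le_div_iff₀ (by positivity)]
  nlinarith [sq_nonneg (p * x - q * y)]

lemma fejer (n : ℕ) (hn : 2 ≤ n) (a : ℕ → ℝ) :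
    ∑ k ∈ range (n - 1), a k * a (k + 1)
      ≤ Real.cos (π / (n + 1)) * ∑ k ∈ range n, a k ^ 2 := by
  obtain ⟨m, rfl⟩ : ∃ m, n = m + 1 := ⟨n - 1, by omega⟩
  simp only [Nat.add_sub_cancel]
  set c := Real.cos (π / (m + 1 + 1)) with hc
  have key : ∀ k ∈ range m,
      2 * (a k * a (k + 1)) ≤ dd (m+1) (k + 2) / dd (m+1) (k + 1) * a k ^ 2
        + dd (m+1) (k + 1) / dd (m+1) (k + 2) * a (k + 1) ^ 2 := by
    intro k hk
    simp only [mem_range] at hk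
    exact amgm _ _ _ _ (dd_pos _ _ (by omega) (by omega)) (dd_pos _ _ (by omega) (by omega))
  have h1 := Finset.sum_le_sum key
  rw [← Finset.mul_sum, Finset.sum_add_distrib] at h1
  have e1 : ∑ k ∈ range m, dd (m+1) (k + 2) / dd (m+1) (k + 1) * a k ^ 2
      = ∑ k ∈ range (m+1), dd (m+1) (k + 2) / dd (m+1) (k + 1) * a k ^ 2 := by
    rw [Finset.sum_range_succ, dd_top, zero_div, zero_mul, add_zero]
  have e2 : ∑ k ∈ range m, dd (m+1) (k + 1) / dd (m+1) (k + 2) * a (k + 1) ^ 2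
      = ∑ k ∈ range (m+1), dd (m+1) k / dd (m+1) (k + 1) * a k ^ 2 := by
    rw [Finset.sum_range_succ' (fun k => dd (m+1) k / dd (m+1) (k + 1) * a k ^ 2) m,
        dd_zero, zero_div, zero_mul, add_zero]
  rw [e1, e2, ← Finset.sum_add_distrib] at h1
  have e3 : ∑ k ∈ range (m+1),
      (dd (m+1) (k + 2) / dd (m+1) (k + 1) * a k ^ 2 + dd (m+1) k / dd (m+1) (k + 1) * a k ^ 2)
      = 2 * c * ∑ k ∈ range (m+1), a k ^ 2 := by
    rw [Finset.mul_sum]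
    apply Finset.sum_congr rfl
    intro k hk
    simp only [mem_range] at hk
    have hdk : dd (m+1) (k+1) ≠ 0 := ne_of_gt (dd_pos _ _ (by omega) (by omega))
    have hrec := dd_rec (m+1) k
    push_cast at hrec
    field_simp
    nlinarith [hrec]
  rw [e3] at h1
  push_cast
  linarith

lemma sumBA (n : ℕ) (hn : 2 ≤ n) :
    ∑ k ∈ range (n - 1), dd n (k + 1) * dd n (k + 2)
      = Real.cos (π / (n + 1)) * ∑ k ∈ range n, dd n (k + 1) ^ 2 := by
  obtain ⟨m, rfl⟩ : ∃ m, n = m + 1 := ⟨n - 1, by omega⟩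
  simp only [Nat.add_sub_cancel]
  set c := Real.cos (π / (m + 1 + 1)) with hc
  have key : ∀ k ∈ range (m+1),
      dd (m+1) k * dd (m+1) (k+1) + dd (m+1) (k+1) * dd (m+1) (k+2)
        = 2 * c * dd (m+1) (k+1) ^ 2 := by
    intro k _
    have hrec := dd_rec (m+1) k
    push_cast at hrec
    linear_combination dd (m+1) (k+1) * hrec
  have h1 := Finset.sum_congr rfl key
  rw [Finset.sum_add_distrib, ← Finset.mul_sum] at h1
  have e1 : ∑ k ∈ range (m+1), dd (m+1) k * dd (m+1) (k+1)
      = ∑ k ∈ range m, dd (m+1) (k+1) * dd (m+1) (k+2) := by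
    rw [Finset.sum_range_succ' (fun k => dd (m+1) k * dd (m+1) (k + 1)) m,
        dd_zero, zero_mul, add_zero]
  have e2 : ∑ k ∈ range (m+1), dd (m+1) (k+1) * dd (m+1) (k+2)
      = ∑ k ∈ range m, dd (m+1) (k+1) * dd (m+1) (k+2) := by
    rw [Finset.sum_range_succ, dd_top, mul_zero, add_zero]
  rw [e1, e2] at h1
  push_cast
  linarith

lemma sumA_pos (n : ℕ) (hn : 2 ≤ n) : 0 < ∑ k ∈ range n, dd n (k + 1) ^ 2 := by
  apply Finset.sum_pos
  · intro k hk
    simp only [mem_range] at hk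
    exact pow_pos (dd_pos _ _ (by omega) (by omega)) 2
  · exact ⟨0, by simp; omega⟩

/-- Extension of `x : Fin n → ℂ` to `ℕ` by zero. -/
def yext (n : ℕ) (x : Fin n → ℂ) (k : ℕ) : ℂ := if h : k < n then x ⟨k, h⟩ else 0

lemma yext_of_lt (n : ℕ) (x : Fin n → ℂ) (i : Fin n) : yext n x i = x i := by
  simp [yext, i.isLt]

lemma yext_of_ge (n : ℕ) (x : Fin n → ℂ) (k : ℕ) (h : n ≤ k) : yext n x k = 0 := by
  simp [yext, not_lt.mpr h]

lemma quad (n : ℕ) (x : Fin n → ℂ) :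
    star x ⬝ᵥ (shiftMatrix n *ᵥ x)
      = ∑ k ∈ range n, (starRingEnd ℂ) (yext n x (k + 1)) * yext n x k := by
  set y := yext n x with hy
  have hxy : ∀ i : Fin n, x i = y i := fun i => (yext_of_lt n x i).symm
  have step1 : star x ⬝ᵥ (shiftMatrix n *ᵥ x)
      = ∑ i : Fin n, ∑ j : Fin n,
          (if (i : ℕ) = (j : ℕ) + 1 then (starRingEnd ℂ) (y (i:ℕ)) * y (j:ℕ) else 0) := by
    simp only [dotProduct, mulVec, shiftMatrix, Matrix.of_apply, Pi.star_apply]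
    apply Finset.sum_congr rfl
    intro i _
    rw [Finset.mul_sum]
    apply Finset.sum_congr rfl
    intro j _
    rw [← hxy, ← hxy]
    split <;> simp [Complex.star_def]
  rw [step1]
  rw [Finset.sum_comm]
  have step2 : ∀ j : Fin n,
      ∑ i : Fin n, (if (i : ℕ) = (j : ℕ) + 1 then (starRingEnd ℂ) (y (i:ℕ)) * y (j:ℕ) else 0)
        = (starRingEnd ℂ) (y ((j:ℕ) + 1)) * y (j:ℕ) := by
    intro j
    rw [Fin.sum_univ_eq_sum_range
      (fun i => if i = (j : ℕ) + 1 then (starRingEnd ℂ) (y i) * y (j:ℕ) else 0) n]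
    rw [Finset.sum_ite_eq' (range n) ((j:ℕ) + 1) (fun i => (starRingEnd ℂ) (y i) * y (j:ℕ))]
    split
    · rfl
    · rename_i h
      rw [hy, yext_of_ge n x ((j:ℕ)+1) (by simpa using h)]
      simp
  calc ∑ j : Fin n, ∑ i : Fin n,
        (if (i : ℕ) = (j : ℕ) + 1 then (starRingEnd ℂ) (y (i:ℕ)) * y (j:ℕ) else 0)
      = ∑ j : Fin n, (starRingEnd ℂ) (y ((j:ℕ) + 1)) * y (j:ℕ) :=
        Finset.sum_congr rfl fun j _ => step2 j
    _ = ∑ k ∈ range n, (starRingEnd ℂ) (y (k + 1)) * y k :=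
        Fin.sum_univ_eq_sum_range (fun k => (starRingEnd ℂ) (y (k + 1)) * y k) n

end Aux

open Finset in
open Real in
theorem numRange_shiftMatrix_eq_closedDisc_and_numRadius
    (n : ℕ) (hn : 2 ≤ n) :
    numRange (shiftMatrix n) = {z : ℂ | ‖z‖ ≤ cos (π / (n + 1))} ∧
    sSup {r : ℝ | ∃ z ∈ numRange (shiftMatrix n), r = ‖z‖}
      = cos (π / (n + 1)) := by
  have hcpos : 0 < Real.cos (π / (n + 1)) := cos_theta_pos n hn
  set c := Real.cos (π / (n + 1)) with hcdef
  have hset : numRange (shiftMatrix n) = {z : ℂ | ‖z‖ ≤ c} := by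
    ext z
    simp only [Set.mem_setOf_eq, numRange]
    constructor
    · rintro ⟨x, hx, rfl⟩
      rw [quad n x]
      set y := yext n x with hy
      set a : ℕ → ℝ := fun k => ‖y k‖ with ha
      have habs : ‖∑ k ∈ range n, (starRingEnd ℂ) (y (k+1)) * y k‖
          ≤ ∑ k ∈ range n, a (k+1) * a k := by
        refine le_trans (norm_sum_le _ _) (le_of_eq ?_)
        apply Finset.sum_congr rfl
        intro k _
        rw [norm_mul, Complex.norm_conj]
      have hshift : ∑ k ∈ range n, a (k+1) * a k = ∑ k ∈ range (n-1), a k * a (k+1) := by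
        obtain ⟨m, hm⟩ : ∃ m, n = m + 1 := ⟨n - 1, by omega⟩
        subst hm
        rw [Finset.sum_range_succ]
        have : a (m + 1) = 0 := by
          rw [ha]; simp only []
          rw [hy, yext_of_ge _ _ _ (le_refl _)]
          simp
        rw [this, zero_mul, add_zero, Nat.add_sub_cancel]
        exact Finset.sum_congr rfl fun k _ => mul_comm _ _
      have hnorm : ∑ k ∈ range n, a k ^ 2 = ∑ i, ‖x i‖ ^ 2 := by
        rw [← Fin.sum_univ_eq_sum_range (fun k => a k ^ 2) n]
        apply Finset.sum_congr rfl
        intro i _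
        rw [ha]; simp only []
        rw [hy, yext_of_lt]
      calc ‖∑ k ∈ range n, (starRingEnd ℂ) (y (k+1)) * y k‖
          ≤ ∑ k ∈ range (n-1), a k * a (k+1) := by rw [← hshift]; exact habs
        _ ≤ c * ∑ k ∈ range n, a k ^ 2 := fejer n hn a
        _ ≤ c * 1 := by
            apply mul_le_mul_of_nonneg_left _ (le_of_lt hcpos)
            rw [hnorm]; exact hx
        _ = c := mul_one c
    · intro hz
      by_cases h0 : z = 0
      · subst h0
        exact ⟨0, by simp, by simp⟩
      · set r := ‖z‖ with hr
        have hrpos : 0 < r := norm_pos_iff.mpr h0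
        set A := ∑ k ∈ range n, dd n (k + 1) ^ 2 with hA
        have hApos : 0 < A := sumA_pos n hn
        set t := r / c with ht
        have htpos : 0 < t := div_pos hrpos hcpos
        set s := Real.sqrt (t / A) with hs
        have hs2 : s ^ 2 = t / A := Real.sq_sqrt (by positivity)
        set w : ℂ := z / (r : ℂ) with hw
        have hrne : (r : ℂ) ≠ 0 := by
          simp only [ne_eq, Complex.ofReal_eq_zero]
          exact ne_of_gt hrpos
        have habsw : ‖w‖ = 1 := by
          rw [hw, norm_div, Complex.norm_of_nonneg hrpos.le, ← hr, div_self (ne_of_gt hrpos)]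
        have hwcw : w * (starRingEnd ℂ) w = 1 := by
          rw [Complex.mul_conj, Complex.normSq_eq_norm_sq, habsw]
          norm_num
        set x : Fin n → ℂ :=
          fun j => ((s * dd n ((j:ℕ) + 1) : ℝ) : ℂ) * ((starRingEnd ℂ) w) ^ (j:ℕ) with hx
        set X : ℕ → ℂ :=
          fun k => ((s * dd n (k + 1) : ℝ) : ℂ) * ((starRingEnd ℂ) w) ^ k with hX
        have hyX : ∀ k ≤ n, yext n x k = X k := by
          intro k hk
          rcases lt_or_eq_of_le hk with h | h
          · rw [yext]; rw [dif_pos h]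
          · subst h
            rw [yext_of_ge _ _ _ (le_refl _), hX]
            simp only []
            rw [dd_top]
            simp
        refine ⟨x, ?_, ?_⟩
        · have : ∀ i : Fin n, ‖x i‖ ^ 2 = (s * dd n ((i:ℕ) + 1)) ^ 2 := by
            intro i
            rw [hx]
            simp only []
            rw [norm_mul, norm_pow,
                Complex.norm_real, Complex.norm_conj, habsw, one_pow, mul_one, Real.norm_eq_abs, sq_abs]
          calc ∑ i, ‖x i‖ ^ 2 = ∑ i : Fin n, (s * dd n ((i:ℕ) + 1)) ^ 2 :=
                Finset.sum_congr rfl fun i _ => this i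
            _ = ∑ k ∈ range n, (s * dd n (k + 1)) ^ 2 :=
                Fin.sum_univ_eq_sum_range (fun k => (s * dd n (k + 1)) ^ 2) n
            _ = s ^ 2 * A := by
                rw [hA, Finset.mul_sum]
                exact Finset.sum_congr rfl fun k _ => by ring
            _ = t := by rw [hs2]; field_simp
            _ ≤ 1 := by
                rw [ht, div_le_one hcpos]
                exact hz
        · rw [quad n x]
          have hterm : ∀ k ∈ range n,
              (starRingEnd ℂ) (yext n x (k + 1)) * yext n x k
                = ((s ^ 2 * (dd n (k + 1) * dd n (k + 2)) : ℝ) : ℂ) * w := by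
            intro k hk
            simp only [mem_range] at hk
            rw [hyX (k+1) (by omega), hyX k (by omega), hX]
            simp only []
            rw [_root_.map_mul, Complex.conj_ofReal, _root_.map_pow, Complex.conj_conj]
            have hpow : w ^ (k+1) * ((starRingEnd ℂ) w) ^ k = w := by
              rw [pow_succ, mul_comm (w ^ k) w, mul_assoc, ← mul_pow, hwcw, one_pow, mul_one]
            push_cast
            calc (↑s * ↑(dd n (k + 2))) * w ^ (k+1) * ((↑s * ↑(dd n (k + 1))) * ((starRingEnd ℂ) w) ^ k)
                = (↑s * ↑(dd n (k + 2)) * (↑s * ↑(dd n (k + 1)))) * (w ^ (k+1) * ((starRingEnd ℂ) w) ^ k) := by ring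
              _ = (↑s)^2 * (↑(dd n (k + 1)) * ↑(dd n (k + 2))) * w := by rw [hpow]; ring
          rw [Finset.sum_congr rfl hterm, ← Finset.sum_mul]
          have hsum : ∑ k ∈ range n, ((s ^ 2 * (dd n (k + 1) * dd n (k + 2)) : ℝ) : ℂ)
              = ((s ^ 2 * (c * A) : ℝ) : ℂ) := by
            rw [← Complex.ofReal_sum]
            congr 1
            rw [← Finset.mul_sum]
            congr 1
            have hB : ∑ k ∈ range n, dd n (k + 1) * dd n (k + 2)
                = ∑ k ∈ range (n-1), dd n (k + 1) * dd n (k + 2) := by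
              obtain ⟨m, hm⟩ : ∃ m, n = m + 1 := ⟨n - 1, by omega⟩
              subst hm
              rw [Finset.sum_range_succ, Nat.add_sub_cancel, dd_top, mul_zero, add_zero]
            rw [hB, sumBA n hn]
          rw [hsum]
          have : (s ^ 2 * (c * A) : ℝ) = r := by
            rw [hs2, ht]
            field_simp
          rw [this, hw]
          field_simp
  refine ⟨hset, ?_⟩
  have hsetr : {r : ℝ | ∃ z ∈ numRange (shiftMatrix n), r = ‖z‖} = Set.Icc 0 c := by
    rw [hset]
    ext r
    simp only [Set.mem_setOf_eq, Set.mem_Icc]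
    constructor
    · rintro ⟨z, hz, rfl⟩
      exact ⟨norm_nonneg z, hz⟩
    · rintro ⟨h0, h1⟩
      refine ⟨(r : ℂ), ?_, ?_⟩
      · simpa [Complex.norm_real, abs_of_nonneg h0] using h1
      · rw [Complex.norm_of_nonneg h0]
  rw [hsetr]
  exact csSup_Icc (le_of_lt hcpos)
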